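/- Let f : V → [0,∞], let A : V → W be a bounded linear operator between real separable Hilbert spaces, let d ∈ W, and define J(x) = f(x) + (1/2)‖Ax − d‖² and J_γ(x) = Q_γ(f)(x) + (1/2)‖Ax − d‖². If γ > 0 satisfies ‖A‖² ≤ γ (operator norm), then J**(x) ≤ J_γ(x) ≤ J(x) for all x ∈ V, where J** is the lower semicontinuous convex envelope of J. -/

import Mathlib

set_option linter.unusedSectionVars false
set_option maxHeartbeats 1000000

open scoped RealInnerProductSpace

variable {V : Type*} [NormedAddCommGroup V] [InnerProductSpace ℝ V] [CompleteSpace V]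
  [TopologicalSpace.SeparableSpace V]

/-- The quadratic envelope `Q_γ(f)`:
`Q_γ(f)(x) = sup { α − (γ/2)‖x−y‖² : α ∈ ℝ, y ∈ V, α − (γ/2)‖·−y‖² ≤ f }`. -/
noncomputable def Qenv (γ : ℝ) (f : V → EReal) (x : V) : EReal :=
  sSup {v : EReal | ∃ α : ℝ, ∃ y : V,
    (∀ z : V, ((α - γ / 2 * ‖z - y‖ ^ 2 : ℝ) : EReal) ≤ f z) ∧
      v = ((α - γ / 2 * ‖x - y‖ ^ 2 : ℝ) : EReal)}

/-- The transform `S_γ(f)(y) = sup_x ( −f(x) − (γ/2)‖x−y‖² )`. -/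
noncomputable def Senv (γ : ℝ) (f : V → EReal) (y : V) : EReal :=
  ⨆ x : V, (-(f x) - ((γ / 2 * ‖x - y‖ ^ 2 : ℝ) : EReal))

/-- Convexity for extended-real-valued functions. -/
def ERealConvex (g : V → EReal) : Prop :=
  ∀ x y : V, ∀ a b : ℝ, 0 ≤ a → 0 ≤ b → a + b = 1 →
    g (a • x + b • y) ≤ (a : EReal) * g x + (b : EReal) * g y

/-- The lower semicontinuous convex envelope: the (pointwise) greatest lower semicontinuous
convex minorant of `g`. -/
noncomputable def convEnv (g : V → EReal) (x : V) : EReal :=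
  ⨆ h : {h : V → EReal // LowerSemicontinuous h ∧ ERealConvex h ∧ ∀ z, h z ≤ g z}, h.1 x

/-- Lower semicontinuity with respect to the weak topology of `V`. -/
def WeaklyLSC (g : V → EReal) : Prop :=
  LowerSemicontinuous (fun x : WeakSpace ℝ V => g x)

/-- `h` is coercive iff all its sublevel sets are bounded. -/
def Coercive (h : V → EReal) : Prop :=
  ∀ c : ℝ, Bornology.IsBounded {x : V | h x ≤ (c : EReal)}


/-- `J(x) = f(x) + (1/2)‖Ax − d‖²`. -/
noncomputable def Jfun {W : Type*} [NormedAddCommGroup W] [InnerProductSpace ℝ W]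
    (f : V → EReal) (A : V →L[ℝ] W) (d : W) (x : V) : EReal :=
  f x + ((1 / 2 * ‖A x - d‖ ^ 2 : ℝ) : EReal)

/-- `J_γ(x) = Q_γ(f)(x) + (1/2)‖Ax − d‖²`. -/
noncomputable def Jgamma {W : Type*} [NormedAddCommGroup W] [InnerProductSpace ℝ W]
    (γ : ℝ) (f : V → EReal) (A : V →L[ℝ] W) (d : W) (x : V) : EReal :=
  Qenv γ f x + ((1 / 2 * ‖A x - d‖ ^ 2 : ℝ) : EReal)

/-! ### Auxiliary lemmas -/

lemma Qenv_le_self (γ : ℝ) (f : V → EReal) (x : V) : Qenv γ f x ≤ f x := by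
  refine sSup_le ?_
  rintro v ⟨α, y, hαy, rfl⟩
  exact hαy x

lemma coe_sub_le_of_le_add {a c : ℝ} {u : EReal} (h : (a : EReal) ≤ u + (c : EReal)) :
    ((a - c : ℝ) : EReal) ≤ u := by
  induction u with
  | bot => simp at h
  | coe r =>
    rw [← EReal.coe_add] at h
    exact EReal.coe_le_coe_iff.2 (by linarith [EReal.coe_le_coe_iff.1 h])
  | top => exact le_top

lemma EReal.le_of_forall_coe_lt {a b : EReal} (h : ∀ c : ℝ, (c : EReal) < a → (c : EReal) ≤ b) :
    a ≤ b := by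
  by_contra hlt
  push_neg at hlt
  obtain ⟨c, hc1, hc2⟩ := EReal.exists_between_coe_real hlt
  exact absurd (h c hc2) (not_le.2 hc1)

lemma aff_le_Qenv {γ : ℝ} (hγ : 0 < γ) (f : V → EReal) (L : V →L[ℝ] ℝ) (β : ℝ)
    (h : ∀ z : V, ((L z + β : ℝ) : EReal) ≤ f z + ((γ / 2 * ‖z‖ ^ 2 : ℝ) : EReal)) (x : V) :
    ((L x + β - γ / 2 * ‖x‖ ^ 2 : ℝ) : EReal) ≤ Qenv γ f x := by
  set w := (InnerProductSpace.toDual ℝ V).symm L with hw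
  have hwL : ∀ z : V, ⟪w, z⟫ = L z := fun z => InnerProductSpace.toDual_symm_apply
  set y := γ⁻¹ • w with hy
  have key : ∀ z : V, (β + γ / 2 * ‖y‖ ^ 2) - γ / 2 * ‖z - y‖ ^ 2
      = L z + β - γ / 2 * ‖z‖ ^ 2 := by
    intro z
    have h1 : ‖z - y‖ ^ 2 = ‖z‖ ^ 2 - 2 * ⟪z, y⟫ + ‖y‖ ^ 2 := norm_sub_sq_real z y
    have h2 : γ * ⟪z, y⟫ = L z := by
      rw [real_inner_comm, hy, real_inner_smul_left, hwL, ← mul_assoc,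
        mul_inv_cancel₀ hγ.ne', one_mul]
    rw [h1]; ring_nf; nlinarith [h2]
  refine le_sSup ⟨β + γ / 2 * ‖y‖ ^ 2, y, fun z => ?_, by rw [key x]⟩
  rw [key z]
  exact coe_sub_le_of_le_add (h z)

lemma bot_propagates {φ : V → EReal} (hlsc : LowerSemicontinuous φ) (hconv : ERealConvex φ)
    {z : V} (hz : φ z = ⊥) (x : V) : φ x = ⊥ := by
  by_contra hx
  have hbl : (⊥ : EReal) < φ x := bot_lt_iff_ne_bot.2 hx
  obtain ⟨c, -, hc2⟩ := EReal.exists_between_coe_real hbl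
  have h1 : ∀ᶠ x' in nhds x, (c : EReal) < φ x' := hlsc x c hc2
  set g : ℝ → V := fun t => (1 - t) • x + t • z with hg
  have hgc : Continuous g := by fun_prop
  have hg0 : g 0 = x := by simp [hg]
  have h2 : ∀ᶠ t in nhds (0 : ℝ), (c : EReal) < φ (g t) := by
    have := (hgc.tendsto 0).eventually (hg0 ▸ h1)
    exact this
  have h3 : ∀ᶠ t in nhdsWithin (0 : ℝ) (Set.Ioi 0), (c : EReal) < φ (g t) :=
    nhdsWithin_le_nhds h2
  have h4 : Set.Ioo (0 : ℝ) 1 ∈ nhdsWithin (0 : ℝ) (Set.Ioi 0) :=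
    Ioo_mem_nhdsGT_of_mem (by constructor <;> norm_num)
  obtain ⟨t, ht, htIoo⟩ := (h3.and (Filter.eventually_of_mem h4 (fun _ h => h))).exists
  obtain ⟨ht0, ht1⟩ := htIoo
  have hcv := hconv x z (1 - t) t (by linarith) (le_of_lt ht0) (by ring)
  rw [hz] at hcv
  have hbot : ((t : EReal)) * (⊥ : EReal) = ⊥ := EReal.coe_mul_bot_of_pos ht0
  rw [hbot, EReal.add_bot] at hcv
  have : (c : EReal) < ⊥ := lt_of_lt_of_le ht hcv
  exact absurd this (by simp)

lemma exists_affine_minorant {φ : V → EReal} (hlsc : LowerSemicontinuous φ)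
    (hconv : ERealConvex φ) (hnb : ∀ z, φ z ≠ ⊥) (x : V) (c : ℝ) (hc : (c : EReal) < φ x) :
    ∃ (L : V →L[ℝ] ℝ) (β : ℝ), (∀ z, ((L z + β : ℝ) : EReal) ≤ φ z) ∧ c < L x + β := by
  by_cases htop : ∀ z, φ z = ⊤
  · exact ⟨0, c + 1, fun z => by rw [htop z]; exact le_top, by simp⟩
  push_neg at htop
  obtain ⟨z₀, hz₀⟩ := htop
  set r₀ : ℝ := (φ z₀).toReal with hr₀
  have hφz₀ : φ z₀ = (r₀ : EReal) := (EReal.coe_toReal hz₀ (hnb z₀)).symm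
  set E : Set (V × ℝ) := {p | φ p.1 ≤ (p.2 : EReal)} with hE
  have Eclosed : IsClosed E := by
    have h1 : IsClosed {p : V × EReal | φ p.1 ≤ p.2} := hlsc.isClosed_epigraph
    exact h1.preimage (continuous_fst.prodMk (continuous_coe_real_ereal.comp continuous_snd))
  have Econv : Convex ℝ E := by
    rintro p hp q hq a b ha hb hab
    have h1 := hconv p.1 q.1 a b ha hb hab
    have h2 : (a : EReal) * φ p.1 ≤ (a : EReal) * ((p.2 : ℝ) : EReal) :=
      mul_le_mul_of_nonneg_left hp (by exact_mod_cast ha)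
    have h3 : (b : EReal) * φ q.1 ≤ (b : EReal) * ((q.2 : ℝ) : EReal) :=
      mul_le_mul_of_nonneg_left hq (by exact_mod_cast hb)
    show φ ((a • p + b • q).1) ≤ (((a • p + b • q).2 : ℝ) : EReal)
    have hfst : (a • p + b • q).1 = a • p.1 + b • q.1 := rfl
    have hsnd : (a • p + b • q).2 = a * p.2 + b * q.2 := rfl
    rw [hfst, hsnd]
    calc φ (a • p.1 + b • q.1) ≤ (a : EReal) * φ p.1 + (b : EReal) * φ q.1 := h1
      _ ≤ (a : EReal) * ((p.2 : ℝ) : EReal) + (b : EReal) * ((q.2 : ℝ) : EReal) :=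
          add_le_add h2 h3
      _ = ((a * p.2 + b * q.2 : ℝ) : EReal) := by
          rw [EReal.coe_add, EReal.coe_mul, EReal.coe_mul]
  have sep : ∀ (x' : V) (c' : ℝ), (c' : EReal) < φ x' →
      ∃ (L : V →L[ℝ] ℝ) (s u : ℝ),
        (∀ z : V, ∀ t : ℝ, φ z ≤ (t : EReal) → L z + t * s < u) ∧ u < L x' + c' * s := by
    intro x' c' hc'
    have hnot : (x', c') ∉ E := fun hmem => absurd hmem (not_le.2 hc')
    obtain ⟨F, u, hFE, hFx⟩ := geometric_hahn_banach_closed_point Econv Eclosed hnot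
    set L : V →L[ℝ] ℝ := F.comp (ContinuousLinearMap.inl ℝ V ℝ) with hL
    set s : ℝ := F (0, 1) with hs
    have hdecomp : ∀ (z : V) (t : ℝ), F (z, t) = L z + t * s := by
      intro z t
      have h1 : (z, t) = ((z, 0) : V × ℝ) + t • ((0 : V), (1 : ℝ)) := by
        ext <;> simp
      rw [h1, map_add, map_smul, smul_eq_mul]
      rfl
    refine ⟨L, s, u, fun z t hzt => ?_, ?_⟩
    · have := hFE (z, t) hzt
      rwa [hdecomp] at this
    · have := hFx
      rwa [hdecomp] at this
  have hsle : ∀ (L : V →L[ℝ] ℝ) (s u : ℝ),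
      (∀ z : V, ∀ t : ℝ, φ z ≤ (t : EReal) → L z + t * s < u) → s ≤ 0 := by
    intro L s u hLs
    by_contra hpos
    push_neg at hpos
    set t : ℝ := max r₀ ((u - L z₀) / s + 1) with ht
    have hmem : φ z₀ ≤ (t : EReal) := by
      rw [hφz₀]
      exact EReal.coe_le_coe_iff.2 (le_max_left _ _)
    have h1 := hLs z₀ t hmem
    have h2 : (u - L z₀) / s + 1 ≤ t := le_max_right _ _
    have h3 : ((u - L z₀) / s + 1) * s ≤ t * s := mul_le_mul_of_nonneg_right h2 hpos.le
    have h4 : ((u - L z₀) / s + 1) * s = u - L z₀ + s := by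
      field_simp
    nlinarith
  have minorant_of_neg : ∀ (L : V →L[ℝ] ℝ) (s u : ℝ), s < 0 →
      (∀ z : V, ∀ t : ℝ, φ z ≤ (t : EReal) → L z + t * s < u) →
      ∀ z : V, (((L z - u) / (-s) : ℝ) : EReal) ≤ φ z := by
    intro L s u hsneg hLs z
    rcases eq_top_or_lt_top (φ z) with h | h
    · rw [h]; exact le_top
    · have hr : φ z = (((φ z).toReal : ℝ) : EReal) := (EReal.coe_toReal h.ne (hnb z)).symm
      rw [hr]
      refine EReal.coe_le_coe_iff.2 ?_
      have h1 := hLs z (φ z).toReal (le_of_eq hr)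
      rw [div_le_iff₀ (by linarith : (0:ℝ) < -s)]
      nlinarith
  obtain ⟨L, s, u, hLs, hLx⟩ := sep x c hc
  rcases lt_or_eq_of_le (hsle L s u hLs) with hsneg | hszero
  · refine ⟨(1 / (-s)) • L, u / s, fun z => ?_, ?_⟩
    · have h1 := minorant_of_neg L s u hsneg hLs z
      have h2 : ((1 / (-s)) • L) z + u / s = (L z - u) / (-s) := by
        rw [ContinuousLinearMap.smul_apply, smul_eq_mul]
        field_simp [hsneg.ne]
        ring
      rw [h2]
      exact h1
    · have h2 : ((1 / (-s)) • L) x + u / s = (L x - u) / (-s) := by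
        rw [ContinuousLinearMap.smul_apply, smul_eq_mul]
        field_simp [hsneg.ne]
        ring
      rw [h2, lt_div_iff₀ (by linarith : (0:ℝ) < -s)]
      nlinarith
  · obtain ⟨L₁, s₁, u₁, hL₁s, hL₁x⟩ := sep z₀ (r₀ - 1) (by
      rw [hφz₀]; exact EReal.coe_lt_coe_iff.2 (by linarith))
    have hs₁le : s₁ ≤ 0 := hsle L₁ s₁ u₁ hL₁s
    have hs₁ne : s₁ ≠ 0 := by
      intro h0
      have h1 := hL₁s z₀ r₀ (le_of_eq hφz₀)
      rw [h0] at h1 hL₁x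
      simp at h1 hL₁x
      linarith
    have hs₁neg : s₁ < 0 := lt_of_le_of_ne hs₁le hs₁ne
    have hm₁ := minorant_of_neg L₁ s₁ u₁ hs₁neg hL₁s
    have hdom : ∀ z : V, ∀ t : ℝ, φ z ≤ (t : EReal) → L z < u := by
      intro z t hzt
      have h := hLs z t hzt
      rw [hszero] at h
      simpa using h
    have hux : u < L x := by
      rw [hszero] at hLx
      simpa using hLx
    set m₁ : V → ℝ := fun z => (L₁ z - u₁) / (-s₁) with hm₁def
    set T : ℝ := max 0 ((c - m₁ x) / (L x - u)) + 1 with hT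
    have hT0 : 0 < T := by
      have := le_max_left (0:ℝ) ((c - m₁ x) / (L x - u))
      simp only [hT]
      linarith
    refine ⟨(1 / (-s₁)) • L₁ + T • L, u₁ / s₁ - T * u, fun z => ?_, ?_⟩
    · rcases eq_top_or_lt_top (φ z) with h | h
      · rw [h]; exact le_top
      · have hr : φ z = (((φ z).toReal : ℝ) : EReal) := (EReal.coe_toReal h.ne (hnb z)).symm
        have hz1 : m₁ z ≤ (φ z).toReal := by
          have := hm₁ z
          rw [hr] at this
          exact_mod_cast this
        have hz2 : L z < u := hdom z (φ z).toReal (le_of_eq hr)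
        have happ : ((1 / (-s₁)) • L₁ + T • L) z + (u₁ / s₁ - T * u)
            = m₁ z + T * (L z - u) := by
          simp only [ContinuousLinearMap.add_apply, ContinuousLinearMap.smul_apply,
            smul_eq_mul, hm₁def]
          field_simp [hs₁ne]
          ring
        rw [hr, happ]
        refine EReal.coe_le_coe_iff.2 ?_
        nlinarith
    · have happ : ((1 / (-s₁)) • L₁ + T • L) x + (u₁ / s₁ - T * u)
          = m₁ x + T * (L x - u) := by
        simp only [ContinuousLinearMap.add_apply, ContinuousLinearMap.smul_apply,
          smul_eq_mul, hm₁def]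
        field_simp [hs₁ne]
        ring
      rw [happ]
      have h1 : (c - m₁ x) / (L x - u) < T := by
        have := le_max_right (0:ℝ) ((c - m₁ x) / (L x - u))
        simp only [hT]
        linarith
      have h2 : (c - m₁ x) / (L x - u) * (L x - u) < T * (L x - u) :=
        mul_lt_mul_of_pos_right h1 (by linarith)
      rw [div_mul_cancel₀ _ (by linarith : L x - u ≠ 0)] at h2
      linarith

lemma norm_combo {E : Type*} [NormedAddCommGroup E] [InnerProductSpace ℝ E] (x y : E)
    {a b : ℝ} (hab : a + b = 1) :
    ‖a • x + b • y‖ ^ 2 = a * ‖x‖ ^ 2 + b * ‖y‖ ^ 2 - a * b * ‖x - y‖ ^ 2 := by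
  have h1 : ‖a • x + b • y‖ ^ 2 = ‖a • x‖ ^ 2 + 2 * ⟪a • x, b • y⟫ + ‖b • y‖ ^ 2 :=
    norm_add_sq_real _ _
  have h2 : ‖x - y‖ ^ 2 = ‖x‖ ^ 2 - 2 * ⟪x, y⟫ + ‖y‖ ^ 2 := norm_sub_sq_real _ _
  have h3 : ⟪a • x, b • y⟫ = a * (b * ⟪x, y⟫) := by
    rw [real_inner_smul_left, real_inner_smul_right]
  have h4 : ‖a • x‖ ^ 2 = a ^ 2 * ‖x‖ ^ 2 := by
    rw [norm_smul, mul_pow, Real.norm_eq_abs, sq_abs]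
  have h5 : ‖b • y‖ ^ 2 = b ^ 2 * ‖y‖ ^ 2 := by
    rw [norm_smul, mul_pow, Real.norm_eq_abs, sq_abs]
  rw [h1, h2, h3, h4, h5]
  linear_combination (a * ‖x‖ ^ 2 + b * ‖y‖ ^ 2) * hab

lemma ereal_mul_add_coe {a : ℝ} (ha : 0 ≤ a) (u : EReal) (r : ℝ) :
    (a : EReal) * (u + (r : EReal)) = (a : EReal) * u + ((a * r : ℝ) : EReal) := by
  rcases eq_or_lt_of_le ha with h0 | hpos
  · rw [← h0]
    simp
  · induction u with
    | bot => rw [EReal.bot_add, EReal.coe_mul_bot_of_pos hpos, EReal.bot_add]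
    | coe v => rw [← EReal.coe_add, ← EReal.coe_mul, ← EReal.coe_mul, ← EReal.coe_add]; ring_nf
    | top => rw [EReal.top_add_coe, EReal.coe_mul_top_of_pos hpos, EReal.top_add_coe]

lemma key_envelope {γ : ℝ} (hγ : 0 < γ) (f : V → EReal) {φ : V → EReal}
    (hlsc : LowerSemicontinuous φ) (hconv : ERealConvex φ)
    (hle : ∀ z, φ z ≤ f z + ((γ / 2 * ‖z‖ ^ 2 : ℝ) : EReal)) (x : V) :
    φ x ≤ Qenv γ f x + ((γ / 2 * ‖x‖ ^ 2 : ℝ) : EReal) := by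
  by_cases hbot : ∃ z, φ z = ⊥
  · obtain ⟨z, hz⟩ := hbot
    rw [bot_propagates hlsc hconv hz x]
    exact bot_le
  push_neg at hbot
  refine EReal.le_of_forall_coe_lt fun c hc => ?_
  obtain ⟨L, β, hmin, hcx⟩ := exists_affine_minorant hlsc hconv hbot x c hc
  have h2 := aff_le_Qenv hγ f L β (fun z => (hmin z).trans (hle z)) x
  calc (c : EReal)
      ≤ ((L x + β - γ / 2 * ‖x‖ ^ 2 : ℝ) : EReal) + ((γ / 2 * ‖x‖ ^ 2 : ℝ) : EReal) := by
        rw [← EReal.coe_add]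
        exact EReal.coe_le_coe_iff.2 (by linarith)
    _ ≤ Qenv γ f x + ((γ / 2 * ‖x‖ ^ 2 : ℝ) : EReal) := add_le_add_left h2 _

theorem stmt_16 {W : Type*} [NormedAddCommGroup W] [InnerProductSpace ℝ W] [CompleteSpace W]
    [TopologicalSpace.SeparableSpace W]
    (f : V → EReal) (hf0 : ∀ x, 0 ≤ f x) (A : V →L[ℝ] W) (d : W)
    (γ : ℝ) (hγ : 0 < γ) (hA : ‖A‖ ^ 2 ≤ γ) :
    ∀ x : V, convEnv (Jfun f A d) x ≤ Jgamma γ f A d x ∧ Jgamma γ f A d x ≤ Jfun f A d x := by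
  intro x
  constructor
  · rw [convEnv]
    refine iSup_le ?_
    rintro ⟨h, hlsc, hconv, hle⟩
    show h x ≤ Jgamma γ f A d x
    simp only [Jfun] at hle
    have hpcont : Continuous fun z : V => γ / 2 * ‖z‖ ^ 2 - 1 / 2 * ‖A z - d‖ ^ 2 := by
      have h1 : Continuous fun z : V => ‖z‖ ^ 2 := continuous_norm.pow 2
      have h2 : Continuous fun z : V => ‖A z - d‖ ^ 2 :=
        ((A.continuous.sub continuous_const).norm.pow 2)
      exact ((continuous_const.mul h1).sub (continuous_const.mul h2))
    set p : V → ℝ := fun z => γ / 2 * ‖z‖ ^ 2 - 1 / 2 * ‖A z - d‖ ^ 2 with hp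
    set φ : V → EReal := fun z => h z + ((p z : ℝ) : EReal) with hφ
    have hφlsc : LowerSemicontinuous φ := by
      refine LowerSemicontinuous.add' hlsc
        ((continuous_coe_real_ereal.comp hpcont).lowerSemicontinuous) ?_
      intro z
      exact EReal.continuousAt_add (Or.inr (EReal.coe_ne_bot _)) (Or.inr (EReal.coe_ne_top _))
    have hpconv : ∀ (y₁ y₂ : V) (a b : ℝ), 0 ≤ a → 0 ≤ b → a + b = 1 →
        p (a • y₁ + b • y₂) ≤ a * p y₁ + b * p y₂ := by
      intro y₁ y₂ a b ha hb hab
      have e1 := norm_combo y₁ y₂ hab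
      have e2 := norm_combo (A y₁ - d) (A y₂ - d) hab
      have e3 : A (a • y₁ + b • y₂) - d = a • (A y₁ - d) + b • (A y₂ - d) := by
        have h9 : a • (A y₁ - d) + b • (A y₂ - d) = a • A y₁ + b • A y₂ - (a + b) • d := by
          module
        rw [h9, hab, one_smul, map_add, map_smul, map_smul]
      have e5 : (A y₁ - d) - (A y₂ - d) = A (y₁ - y₂) := by rw [map_sub]; abel
      rw [← e3, e5] at e2
      have e4 : ‖A (y₁ - y₂)‖ ≤ ‖A‖ * ‖y₁ - y₂‖ := A.le_opNorm _
      have e6 : ‖A (y₁ - y₂)‖ ^ 2 ≤ γ * ‖y₁ - y₂‖ ^ 2 := by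
        have h7 : ‖A (y₁ - y₂)‖ ^ 2 ≤ (‖A‖ * ‖y₁ - y₂‖) ^ 2 :=
          pow_le_pow_left₀ (norm_nonneg _) e4 2
        rw [mul_pow] at h7
        exact h7.trans (mul_le_mul_of_nonneg_right hA (sq_nonneg _))
      simp only [hp]
      nlinarith [mul_nonneg ha hb, e1, e2, e6]
    have hφconv : ERealConvex φ := by
      intro y₁ y₂ a b ha hb hab
      have h1 := hconv y₁ y₂ a b ha hb hab
      have h2 := hpconv y₁ y₂ a b ha hb hab
      calc φ (a • y₁ + b • y₂) = h (a • y₁ + b • y₂) + ((p (a • y₁ + b • y₂) : ℝ) : EReal) := rfl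
        _ ≤ ((a : EReal) * h y₁ + (b : EReal) * h y₂) + ((a * p y₁ + b * p y₂ : ℝ) : EReal) :=
            add_le_add h1 (EReal.coe_le_coe_iff.2 h2)
        _ = ((a : EReal) * h y₁ + ((a * p y₁ : ℝ) : EReal))
              + ((b : EReal) * h y₂ + ((b * p y₂ : ℝ) : EReal)) := by
            rw [EReal.coe_add]
            abel
        _ = (a : EReal) * φ y₁ + (b : EReal) * φ y₂ := by
            rw [show φ y₁ = h y₁ + ((p y₁ : ℝ) : EReal) from rfl,
              show φ y₂ = h y₂ + ((p y₂ : ℝ) : EReal) from rfl,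
              ereal_mul_add_coe ha (h y₁) (p y₁), ereal_mul_add_coe hb (h y₂) (p y₂)]
    have hφle : ∀ z, φ z ≤ f z + ((γ / 2 * ‖z‖ ^ 2 : ℝ) : EReal) := by
      intro z
      calc φ z ≤ (f z + ((1 / 2 * ‖A z - d‖ ^ 2 : ℝ) : EReal)) + ((p z : ℝ) : EReal) :=
            add_le_add_left (hle z) _
        _ = f z + ((γ / 2 * ‖z‖ ^ 2 : ℝ) : EReal) := by
            rw [add_assoc, ← EReal.coe_add]
            congr 2
            simp only [hp]
            ring
    have hkey := key_envelope hγ f hφlsc hφconv hφle x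
    have hre : ((γ / 2 * ‖x‖ ^ 2 : ℝ) : EReal)
        = ((1 / 2 * ‖A x - d‖ ^ 2 : ℝ) : EReal) + ((p x : ℝ) : EReal) := by
      rw [← EReal.coe_add]
      congr 1
      simp only [hp]
      ring
    rw [hre, ← add_assoc] at hkey
    have hkey' : (h x + ((p x : ℝ) : EReal))
        ≤ (Qenv γ f x + ((1 / 2 * ‖A x - d‖ ^ 2 : ℝ) : EReal)) + ((p x : ℝ) : EReal) := hkey
    exact ((EReal.addLECancellable_coe (p x)).add_le_add_iff_right).1 hkey'
  · exact add_le_add_left (Qenv_le_self γ f x) _
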